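/- The number of rooted planar binary trees on leaf set [n+1] that are 1-brushes equals n!. -/

import Mathlib

/-- Rooted planar `(d+1)`-ary trees with leaves labeled by natural numbers:
every internal node has exactly `d+1` children, ordered left to right. -/
inductive PTree (d : ℕ) : Type
  | leaf : ℕ → PTree d
  | node : (Fin (d + 1) → PTree d) → PTree d

namespace PTree

/-- The list of leaf labels, read from left to right. -/
def leaves {d : ℕ} : PTree d → List ℕ
  | leaf a => [a]
  | node f => (List.ofFn fun i => leaves (f i)).flatten

/-- `m(x)`: the smallest leaf label in the tree. -/
def minLeaf {d : ℕ} : PTree d → ℕ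
  | leaf a => a
  | node f => Finset.univ.inf' Finset.univ_nonempty fun i => minLeaf (f i)

/-- A tree is a `d`-brush if at every internal node the `m`-values of the
children increase from left to right and the child with the largest `m`-value
(the rightmost one) is a leaf. -/
def IsBrush {d : ℕ} : PTree d → Prop
  | leaf _ => True
  | node f => (∀ i, IsBrush (f i)) ∧ (StrictMono fun i => minLeaf (f i)) ∧
      ∃ a, f (Fin.last d) = leaf a

/-- The tree has leaf set exactly `{1,…,m}`, each label occurring once. -/
def OnLeafSet {d : ℕ} (T : PTree d) (m : ℕ) : Prop :=
  T.leaves.Nodup ∧ ∀ a, a ∈ T.leaves ↔ a ∈ Finset.Icc 1 m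

lemma minLeaf_node (f : Fin 2 → PTree 1) :
    minLeaf (node f) = min (minLeaf (f 0)) (minLeaf (f 1)) := by
  show Finset.univ.inf' Finset.univ_nonempty (fun i => minLeaf (f i)) = _
  apply le_antisymm
  · exact le_min (Finset.inf'_le _ (Finset.mem_univ 0)) (Finset.inf'_le _ (Finset.mem_univ 1))
  · apply Finset.le_inf'
    intro i _
    fin_cases i
    · exact min_le_left _ _
    · exact min_le_right _ _

lemma leaves_node (f : Fin 2 → PTree 1) :
    leaves (node f) = leaves (f 0) ++ leaves (f 1) := by
  show (List.ofFn fun i => leaves (f i)).flatten = _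
  simp [List.ofFn_succ]

def ofList : List ℕ → PTree 1
  | [] => leaf 1
  | a :: l => node (fun i => if i = 0 then ofList l else leaf a)

def headLabel : PTree 1 → ℕ
  | leaf a => a
  | node _ => 0

def toList : PTree 1 → List ℕ
  | leaf _ => []
  | node f => headLabel (f 1) :: toList (f 0)

lemma last_one : (Fin.last 1) = (1 : Fin 2) := rfl

lemma brush_leaves : ∀ T : PTree 1, T.IsBrush →
    T.leaves = minLeaf T :: (toList T).reverse := by
  intro T
  induction T with
  | leaf a => intro _; simp [leaves, minLeaf, toList]
  | node f ih =>
    rintro ⟨hb, hm, a, ha⟩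
    rw [last_one] at ha
    have hlt : minLeaf (f 0) < minLeaf (f 1) := hm (by decide : (0:Fin 2) < 1)
    rw [leaves_node, minLeaf_node, ih 0 (hb 0)]
    have h1 : leaves (f 1) = [a] := by rw [ha]; rfl
    have h2 : toList (node f) = a :: toList (f 0) := by
      show headLabel (f 1) :: _ = _
      rw [ha]; rfl
    rw [h1, h2, min_eq_left hlt.le]
    simp

lemma minLeaf_le : ∀ (T : PTree 1), ∀ b ∈ T.leaves, minLeaf T ≤ b := by
  intro T
  induction T with
  | leaf a => intro b hb; simp [leaves] at hb; simp [minLeaf, hb]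
  | node f ih =>
    intro b hb
    rw [leaves_node] at hb
    rw [minLeaf_node]
    rcases List.mem_append.mp hb with h | h
    · exact le_trans (min_le_left _ _) (ih 0 b h)
    · exact le_trans (min_le_right _ _) (ih 1 b h)

lemma minLeaf_ofList : ∀ l : List ℕ, (∀ a ∈ l, 2 ≤ a) → minLeaf (ofList l) = 1 := by
  intro l
  induction l with
  | nil => intro _; rfl
  | cons a l ih =>
    intro h
    have h2 : ∀ b ∈ l, 2 ≤ b := fun b hb => h b (List.mem_cons_of_mem a hb)
    show minLeaf (node _) = 1
    rw [minLeaf_node]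
    show min (minLeaf (if (0:Fin 2) = 0 then ofList l else leaf a))
        (minLeaf (if (1:Fin 2) = 0 then ofList l else leaf a)) = 1
    rw [if_pos rfl, if_neg (by decide : (1:Fin 2) ≠ 0), ih h2]
    have ha := h a List.mem_cons_self
    show min 1 (minLeaf (leaf a)) = 1
    show min 1 a = 1
    omega

lemma brush_ofList : ∀ l : List ℕ, (∀ a ∈ l, 2 ≤ a) → IsBrush (ofList l) := by
  intro l
  induction l with
  | nil => intro _; trivial
  | cons a l ih =>
    intro h
    have h2 : ∀ b ∈ l, 2 ≤ b := fun b hb => h b (List.mem_cons_of_mem a hb)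
    have key : minLeaf ((fun i : Fin 2 => if i = 0 then ofList l else leaf a) 0)
        < minLeaf ((fun i : Fin 2 => if i = 0 then ofList l else leaf a) 1) := by
      show minLeaf (if (0:Fin 2) = 0 then ofList l else leaf a)
          < minLeaf (if (1:Fin 2) = 0 then ofList l else leaf a)
      rw [if_pos rfl, if_neg (by decide : (1:Fin 2) ≠ 0), minLeaf_ofList l h2]
      exact h a List.mem_cons_self
    refine ⟨?_, ?_, ?_⟩
    · intro i
      fin_cases i
      · show IsBrush (if (0 : Fin 2) = 0 then ofList l else leaf a)
        rw [if_pos rfl]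
        exact ih h2
      · show IsBrush (if (1 : Fin 2) = 0 then ofList l else leaf a)
        rw [if_neg (by decide : (1:Fin 2) ≠ 0)]
        trivial
    · intro i j hij
      fin_cases i <;> fin_cases j
      · exact absurd hij (by decide)
      · exact key
      · exact absurd hij (by decide)
      · exact absurd hij (by decide)
    · refine ⟨a, ?_⟩
      rw [last_one]
      show (if (1 : Fin 2) = 0 then ofList l else leaf a) = leaf a
      rw [if_neg (by decide : (1:Fin 2) ≠ 0)]

lemma toList_ofList : ∀ l : List ℕ, toList (ofList l) = l := by
  intro l
  induction l with
  | nil => rfl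
  | cons a l ih =>
    show headLabel (if (1:Fin 2) = 0 then ofList l else leaf a)
        :: toList (if (0:Fin 2) = 0 then ofList l else leaf a) = a :: l
    rw [if_neg (by decide : (1:Fin 2) ≠ 0), if_pos rfl, ih]
    rfl

lemma ofList_toList : ∀ T : PTree 1, T.IsBrush → minLeaf T = 1 → ofList (toList T) = T := by
  intro T
  induction T with
  | leaf a => intro _ h1; simp [minLeaf] at h1; simp [toList, ofList, h1]
  | node f ih =>
    rintro ⟨hb, hm, a, ha⟩ h1
    rw [last_one] at ha
    have hlt : minLeaf (f 0) < minLeaf (f 1) := hm (by decide : (0:Fin 2) < 1)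
    rw [minLeaf_node, min_eq_left hlt.le] at h1
    show ofList (headLabel (f 1) :: toList (f 0)) = node f
    show node _ = node f
    congr 1
    funext i
    fin_cases i
    · show (if (0:Fin 2) = 0 then ofList (toList (f 0)) else leaf (headLabel (f 1))) = f 0
      rw [if_pos rfl]
      exact ih 0 (hb 0) h1
    · show (if (1:Fin 2) = 0 then ofList (toList (f 0)) else leaf (headLabel (f 1))) = f 1
      rw [if_neg (by decide : (1:Fin 2) ≠ 0), ha]
      rfl

lemma minLeaf_eq_one {n : ℕ} (T : PTree 1) (hO : T.OnLeafSet (n + 1)) (hB : T.IsBrush) :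
    minLeaf T = 1 := by
  have h1 : (1 : ℕ) ∈ T.leaves := (hO.2 1).mpr (by simp)
  have hle : minLeaf T ≤ 1 := minLeaf_le T 1 h1
  have hmem : minLeaf T ∈ T.leaves := by rw [brush_leaves T hB]; exact List.mem_cons_self
  have := (hO.2 _).mp hmem
  rw [Finset.mem_Icc] at this
  omega

def brushEquiv (n : ℕ) :
    {T : PTree 1 // T.OnLeafSet (n + 1) ∧ T.IsBrush} ≃
    {l : List ℕ // l.Nodup ∧ ∀ a, a ∈ l ↔ a ∈ Finset.Icc 2 (n + 1)} where
  toFun := fun ⟨T, hO, hB⟩ => ⟨toList T, by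
    have h1 : minLeaf T = 1 := minLeaf_eq_one T hO hB
    have hl : T.leaves = 1 :: (toList T).reverse := by rw [brush_leaves T hB, h1]
    have hnd := hO.1
    rw [hl] at hnd
    simp only [List.nodup_cons, List.mem_reverse, List.nodup_reverse] at hnd
    refine ⟨hnd.2, fun a => ?_⟩
    have hm := hO.2 a
    rw [hl] at hm
    simp only [List.mem_cons, List.mem_reverse, Finset.mem_Icc] at hm
    rw [Finset.mem_Icc]
    constructor
    · intro hmem
      have hb := hm.mp (Or.inr hmem)
      have hne : a ≠ 1 := fun e => hnd.1 (e ▸ hmem)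
      omega
    · intro hb
      rcases hm.mpr ⟨by omega, hb.2⟩ with e | hmem
      · omega
      · exact hmem⟩
  invFun := fun ⟨l, hn, hm⟩ => ⟨ofList l, by
    have h2 : ∀ a ∈ l, 2 ≤ a := fun a ha => (Finset.mem_Icc.mp ((hm a).mp ha)).1
    have hB := brush_ofList l h2
    have hleaves : (ofList l).leaves = 1 :: l.reverse := by
      rw [brush_leaves _ hB, minLeaf_ofList l h2, toList_ofList]
    have h1notin : (1 : ℕ) ∉ l := fun h => by have := h2 1 h; omega
    refine ⟨⟨?_, fun a => ?_⟩, hB⟩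
    · rw [hleaves]
      simp only [List.nodup_cons, List.mem_reverse, List.nodup_reverse]
      exact ⟨h1notin, hn⟩
    · rw [hleaves]
      simp only [List.mem_cons, List.mem_reverse, Finset.mem_Icc]
      have hma := hm a
      rw [Finset.mem_Icc] at hma
      constructor
      · rintro (rfl | hmem)
        · omega
        · have := hma.mp hmem; omega
      · intro hb
        by_cases he : a = 1
        · exact Or.inl he
        · exact Or.inr (hma.mpr ⟨by omega, hb.2⟩)⟩
  left_inv := fun ⟨T, hO, hB⟩ => by
    simp only [Subtype.mk.injEq]
    exact ofList_toList T hB (minLeaf_eq_one T hO hB)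
  right_inv := fun ⟨l, hn, hm⟩ => by
    simp only [Subtype.mk.injEq]
    exact toList_ofList l

end PTree


/-- The number of rooted planar binary trees on leaf set `[n+1]` that are
`1`-brushes equals `n!`. -/
theorem stmt_4 (n : ℕ) :
    Nat.card {T : PTree 1 // T.OnLeafSet (n + 1) ∧ T.IsBrush} = n.factorial := by
  rw [Nat.card_congr (PTree.brushEquiv n)]
  set L := (Finset.Icc 2 (n + 1)).sort (· ≤ ·) with hL
  have hLn : L.Nodup := Finset.sort_nodup _ _
  have hLm : ∀ a, a ∈ L ↔ a ∈ Finset.Icc 2 (n + 1) := fun a => Finset.mem_sort _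
  have hLl : L.length = n := by
    rw [hL, Finset.length_sort, Nat.card_Icc]
    omega
  have e1 : {l : List ℕ // l.Nodup ∧ ∀ a, a ∈ l ↔ a ∈ Finset.Icc 2 (n + 1)} ≃
      {l : List ℕ // l ∈ L.permutations} := Equiv.subtypeEquivRight (by
    intro l
    rw [List.mem_permutations]
    constructor
    · rintro ⟨h1, h2⟩
      rw [List.perm_ext_iff_of_nodup h1 hLn]
      intro a; rw [h2, hLm]
    · intro hp
      exact ⟨hp.nodup_iff.mpr hLn, fun a => by rw [hp.mem_iff, hLm]⟩)
  rw [Nat.card_congr e1]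
  have e2 : {l : List ℕ // l ∈ L.permutations} ≃ {l : List ℕ // l ∈ L.permutations.toFinset} :=
    Equiv.subtypeEquivRight (by simp)
  rw [Nat.card_congr e2, Nat.card_eq_fintype_card, Fintype.card_coe,
    List.toFinset_card_of_nodup (List.nodup_permutations L hLn),
    List.length_permutations, hLl]
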